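/- In the biased Shamir-type (k,n) construction over F_t with p ≥ 1/t^k, for any set F of k−1 indices, the average conditional min-entropy satisfies R_∞(S | V_F) = R_∞(S) = −log((p t^k + (1−p) t^{k−1} − 1)/(t^k − 1)). -/

import Mathlib

set_option linter.unusedSectionVars false
set_option linter.unusedVariables false


open Finset Real Filter

/-- `P` is a probability mass function on the finite set `α`. -/
def IsPMF {α : Type*} [Fintype α] (P : α → ℝ) : Prop :=
  (∀ x, 0 ≤ P x) ∧ ∑ x, P x = 1

/-- Min-entropy `R_∞(X) = - log max_x P(x)`. -/
noncomputable def minEnt {α : Type*} [Fintype α] [Nonempty α] (P : α → ℝ) : ℝ :=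
  - Real.log (⨆ x, P x)

/-- Rényi entropy of order `a`: `R_a(X) = (1/(1-a)) log Σ_x P(x)^a`. -/
noncomputable def renyiEnt {α : Type*} [Fintype α] (a : ℝ) (P : α → ℝ) : ℝ :=
  (1 / (1 - a)) * Real.log (∑ x, P x ^ a)

/-- Marginal on the first component of a joint distribution. -/
noncomputable def margX {α β : Type*} [Fintype α] [Fintype β] (P : α × β → ℝ) : α → ℝ :=
  fun x => ∑ y, P (x, y)

/-- Marginal on the second component of a joint distribution. -/
noncomputable def margY {α β : Type*} [Fintype α] [Fintype β] (P : α × β → ℝ) : β → ℝ :=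
  fun y => ∑ x, P (x, y)

/-- Average conditional min-entropy
`R_∞(X|Y) = - log Σ_y P_Y(y) max_x P_{X|Y}(x|y)`. -/
noncomputable def condMinEnt {α β : Type*} [Fintype α] [Fintype β] [Nonempty α]
    (P : α × β → ℝ) : ℝ :=
  - Real.log (∑ y, margY P y * ⨆ x, P (x, y) / margY P y)

/-- Arimoto's conditional Rényi entropy of order `a`:
`R_a(X|Y) = (a/(1-a)) log Σ_y P_Y(y) (Σ_x P_{X|Y}(x|y)^a)^(1/a)`. -/
noncomputable def condRenyiEnt {α β : Type*} [Fintype α] [Fintype β]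
    (a : ℝ) (P : α × β → ℝ) : ℝ :=
  (a / (1 - a)) *
    Real.log (∑ y, margY P y * (∑ x, (P (x, y) / margY P y) ^ a) ^ (1 / a))

/-- Shannon entropy `H(X) = - Σ_x P(x) log P(x)`. -/
noncomputable def shannonEnt {α : Type*} [Fintype α] (P : α → ℝ) : ℝ :=
  ∑ x, Real.negMulLog (P x)

/-- Conditional Shannon entropy `H(X|Y) = H(XY) - H(Y)`. -/
noncomputable def condShannonEnt {α β : Type*} [Fintype α] [Fintype β]
    (P : α × β → ℝ) : ℝ :=
  shannonEnt P - shannonEnt (margY P)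

/-- Distribution of the random variable `X : Ω → α` under the pmf `μ` on `Ω`. -/
noncomputable def dist {Ω α : Type*} [Fintype Ω] [DecidableEq α]
    (μ : Ω → ℝ) (X : Ω → α) : α → ℝ :=
  fun x => ∑ ω, if X ω = x then μ ω else 0

/-- The Shamir-type sharing map `φ : F_t^k → F_t^{n+1}` sending
`(s, r_1, …, r_{k-1})` to `(s, v_1, …, v_n)` with
`v_i = s + Σ_{ℓ=1}^{k-1} x_i^ℓ r_ℓ`. -/
def shamirShare (K : Type*) [Field K] (k n : ℕ) (x : Fin n → K)
    (sr : K × (Fin (k - 1) → K)) : K × (Fin n → K) :=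
  (sr.1, fun i => sr.1 + ∑ ℓ : Fin (k - 1), x i ^ ((ℓ : ℕ) + 1) * sr.2 ℓ)

/-- The distribution table `DT_{(k,n)}`, i.e. the image of `shamirShare`. -/
noncomputable def DT (K : Type*) [Field K] [Fintype K] [DecidableEq K]
    (k n : ℕ) (x : Fin n → K) : Finset (K × (Fin n → K)) :=
  Finset.univ.image (shamirShare K k n x)

/-- The biased joint pmf of `(S, V_1, …, V_n)`: probability `p` on the
all-zero tuple, `(1-p)/(t^k - 1)` on every other tuple of `DT_{(k,n)}`, and
`0` outside `DT_{(k,n)}`, where `t = |K|`. -/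
noncomputable def muShamir (K : Type*) [Field K] [Fintype K] [DecidableEq K]
    (k n : ℕ) (x : Fin n → K) (p : ℝ) : K × (Fin n → K) → ℝ :=
  fun sv =>
    if sv = ((0 : K), fun _ => (0 : K)) then p
    else if sv ∈ DT K k n x then
      (1 - p) / ((Fintype.card K : ℝ) ^ k - 1)
    else 0


section helpers

lemma sum_ite_const {α : Type*} [Fintype α] [DecidableEq α] (a : α) (A B : ℝ) :
    ∑ x, (if x = a then A else B) = A + ((Fintype.card α : ℝ) - 1) * B := by
  have h : ∀ x : α, (if x = a then A else B) = B + (if x = a then A - B else 0) :=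
    fun x => by split <;> ring
  simp_rw [h, Finset.sum_add_distrib, Finset.sum_const, Finset.sum_ite_eq' Finset.univ a]
  simp [Finset.card_univ]
  ring

lemma sum_ite_pair {α β : Type*} [Fintype α] [Fintype β] [DecidableEq α] [DecidableEq β]
    (z : α × β) (s : α) (p q : ℝ) :
    ∑ ω : α × β, (if ω.1 = s then (if ω = z then p else q) else 0) =
      if s = z.1 then p + ((Fintype.card β : ℝ) - 1) * q else (Fintype.card β : ℝ) * q := by
  rw [Fintype.sum_prod_type]
  have h1 : ∀ a : α, (∑ b : β, if a = s then (if (a, b) = z then p else q) else 0)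
      = if a = s then (∑ b : β, if (a, b) = z then p else q) else 0 := by
    intro a; by_cases h : a = s <;> simp [h]
  simp_rw [h1, Finset.sum_ite_eq' Finset.univ s]
  simp only [Finset.mem_univ, if_true]
  obtain ⟨z1, z2⟩ := z
  by_cases hs : s = z1
  · subst hs
    have h2 : ∀ b : β, ((s, b) = (s, z2)) ↔ (b = z2) := by
      intro b
      simp [Prod.mk.injEq]
    simp only [h2, if_pos rfl]
    rw [sum_ite_const]
    simp
  · have h2 : ∀ b : β, ¬((s, b) = (z1, z2)) := by
      intro b h
      exact hs (congrArg Prod.fst h)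
    simp [hs, h2, Finset.sum_const, Finset.card_univ, mul_comm]

lemma sum_ite_bij {γ δ : Type*} [Fintype γ] [Fintype δ] [DecidableEq δ]
    {e : γ → δ} (he : Function.Bijective e) (c z : δ) (p q : ℝ) :
    ∑ ω, (if e ω = c then (if e ω = z then p else q) else 0) = if c = z then p else q := by
  rw [Fintype.sum_bijective e he _ (fun y => if y = c then (if y = z then p else q) else 0)
    (fun ω => rfl)]
  rw [Finset.sum_ite_eq' Finset.univ c]
  simp

lemma ciSup_ite {α : Type*} [Fintype α] [Nonempty α] [DecidableEq α] (a : α) {A B : ℝ}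
    (h : B ≤ A) : (⨆ x, if x = a then A else B) = A := by
  apply le_antisymm
  · exact ciSup_le fun x => by split <;> simp [h]
  · have := le_ciSup (f := fun x : α => if x = a then A else B)
      (Set.Finite.bddAbove (Set.finite_range _)) a
    simpa using this

end helpers

section shamirLemmas

variable (K : Type*) [Field K] [Fintype K] [DecidableEq K]
    (k n : ℕ) (x : Fin n → K)

lemma poly_inj (hx : Function.Injective x) (hx0 : ∀ i, x i ≠ 0)
    (F : Finset (Fin n)) (hF : F.card = k - 1) (hk : 1 ≤ k)
    (r r' : Fin (k-1) → K)
    (h : ∀ i ∈ F, ∑ ℓ : Fin (k-1), x i ^ ((ℓ:ℕ)+1) * r ℓ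
        = ∑ ℓ : Fin (k-1), x i ^ ((ℓ:ℕ)+1) * r' ℓ) : r = r' := by
  set P : Polynomial K := ∑ ℓ : Fin (k-1), Polynomial.C (r ℓ - r' ℓ) * Polynomial.X ^ ((ℓ:ℕ)+1)
    with hP
  have hdeg : P.natDegree < k := by
    have : P.natDegree ≤ k - 1 := by
      apply (Polynomial.natDegree_sum_le _ _).trans
      simp only [Finset.fold_max_le]
      constructor
      · omega
      · intro ℓ _
        refine (Polynomial.natDegree_C_mul_le _ _).trans ?_
        simp only [Polynomial.natDegree_X_pow]
        omega
    omega
  have hs : (insert (0:K) (F.image x)).card = k := by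
    rw [Finset.card_insert_of_notMem, Finset.card_image_of_injective _ hx, hF]
    · omega
    · simp only [Finset.mem_image]
      rintro ⟨i, -, hi⟩
      exact hx0 i hi
  have hPz : P = 0 := by
    apply Polynomial.eq_zero_of_natDegree_lt_card_of_eval_eq_zero' P _ _ (by rw [hs]; exact hdeg)
    intro a ha
    rcases Finset.mem_insert.mp ha with rfl | ha
    · simp [hP, Polynomial.eval_finset_sum]
    · rcases Finset.mem_image.mp ha with ⟨i, hi, rfl⟩
      simp only [hP, Polynomial.eval_finset_sum, Polynomial.eval_mul, Polynomial.eval_C,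
        Polynomial.eval_pow, Polynomial.eval_X]
      have h2 := sub_eq_zero.mpr (h i hi)
      rw [← Finset.sum_sub_distrib] at h2
      rw [← h2]
      exact Finset.sum_congr rfl fun ℓ _ => by ring
  funext ℓ
  have h1 : P.coeff ((ℓ:ℕ)+1) = r ℓ - r' ℓ := by
    rw [hP, Polynomial.finset_sum_coeff]
    rw [Finset.sum_eq_single ℓ]
    · simp [sub_mul, Polynomial.coeff_sub, Polynomial.coeff_C_mul, Polynomial.coeff_X_pow]
    · intro b _ hb
      simp only [Polynomial.coeff_C_mul, Polynomial.coeff_X_pow]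
      rw [if_neg, mul_zero]
      intro hbl
      exact hb (Fin.val_injective (by omega))
    · simp
  rw [hPz] at h1
  simp only [Polynomial.coeff_zero] at h1
  exact sub_eq_zero.mp h1.symm

lemma phi_zero : shamirShare K k n x ((0:K), fun _ => (0:K)) = ((0:K), fun _ => (0:K)) := by
  simp [shamirShare]

lemma phi_inj (hx : Function.Injective x) (hx0 : ∀ i, x i ≠ 0)
    (F : Finset (Fin n)) (hF : F.card = k - 1) (hkn : k - 1 ≤ n) (hk : 1 ≤ k) :
    Function.Injective (shamirShare K k n x) := by
  rintro ⟨s, r⟩ ⟨s', r'⟩ h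
  rw [Prod.ext_iff] at h
  obtain ⟨h1, h2⟩ := h
  simp only [shamirShare] at h1 h2
  subst h1
  have h3 : r = r' := by
    apply poly_inj K k n x hx hx0 F hF hk
    intro i _
    have := congrFun h2 i
    simpa using this
  rw [h3]

lemma psi_bij (hx : Function.Injective x) (hx0 : ∀ i, x i ≠ 0)
    (F : Finset (Fin n)) (hF : F.card = k - 1) (hk : 1 ≤ k) :
    Function.Bijective (fun sr : K × (Fin (k-1) → K) =>
      ((sr.1, fun j : F => sr.1 + ∑ ℓ : Fin (k-1), x j.1 ^ ((ℓ:ℕ)+1) * sr.2 ℓ) :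
        K × (F → K))) := by
  rw [Fintype.bijective_iff_injective_and_card]
  constructor
  · rintro ⟨s, r⟩ ⟨s', r'⟩ h
    rw [Prod.ext_iff] at h
    obtain ⟨h1, h2⟩ := h
    simp only at h1 h2
    subst h1
    have h3 : r = r' := by
      apply poly_inj K k n x hx hx0 F hF hk
      intro i hi
      have := congrFun h2 ⟨i, hi⟩
      simpa using this
    rw [h3]
  · simp [Fintype.card_prod, Fintype.card_fun, Fintype.card_coe, hF]

variable (p : ℝ)

lemma mu_phi (hx : Function.Injective x) (hx0 : ∀ i, x i ≠ 0)
    (F : Finset (Fin n)) (hF : F.card = k - 1) (hkn : k - 1 ≤ n) (hk : 1 ≤ k)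
    (sr : K × (Fin (k-1) → K)) :
    muShamir K k n x p (shamirShare K k n x sr) =
      if sr = ((0:K), fun _ => (0:K)) then p
      else (1 - p) / ((Fintype.card K : ℝ) ^ k - 1) := by
  by_cases h : sr = ((0:K), fun _ => (0:K))
  · rw [h, phi_zero, if_pos rfl, muShamir, if_pos rfl]
  · rw [if_neg h, muShamir, if_neg, if_pos]
    · exact Finset.mem_image_of_mem _ (Finset.mem_univ sr)
    · intro hc
      apply h
      apply phi_inj K k n x hx hx0 F hF hkn hk
      rw [hc, phi_zero]

lemma dist_eq {γ : Type*} [DecidableEq γ]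
    (hx : Function.Injective x) (hx0 : ∀ i, x i ≠ 0)
    (F : Finset (Fin n)) (hF : F.card = k - 1) (hkn : k - 1 ≤ n) (hk : 1 ≤ k)
    (X : K × (Fin n → K) → γ) (c : γ) :
    dist (muShamir K k n x p) X c =
      ∑ sr : K × (Fin (k-1) → K),
        if X (shamirShare K k n x sr) = c then
          (if sr = ((0:K), fun _ => (0:K)) then p
           else (1 - p) / ((Fintype.card K : ℝ) ^ k - 1)) else 0 := by
  have hvanish : ∀ ω ∈ Finset.univ, ω ∉ DT K k n x →
      (if X ω = c then muShamir K k n x p ω else 0) = 0 := by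
    intro ω _ hω
    have hz : (((0:K), fun _ => (0:K)) : K × (Fin n → K)) ∈ DT K k n x := by
      rw [← phi_zero K k n x]
      exact Finset.mem_image_of_mem _ (Finset.mem_univ _)
    have hne : ¬ (ω = (((0:K), fun _ => (0:K)) : K × (Fin n → K))) := by
      intro h
      rw [h] at hω
      exact hω hz
    have : muShamir K k n x p ω = 0 := by
      rw [muShamir]
      rw [if_neg hne, if_neg hω]
    rw [this, ite_self]
  rw [show _root_.dist (muShamir K k n x p) X c
      = ∑ ω, if X ω = c then muShamir K k n x p ω else 0 from rfl]
  rw [← Finset.sum_subset (Finset.subset_univ (DT K k n x)) hvanish, DT,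
    Finset.sum_image (fun a _ b _ h => phi_inj K k n x hx hx0 F hF hkn hk h)]
  exact Finset.sum_congr rfl fun sr _ => by
    rw [mu_phi K k n x p hx hx0 F hF hkn hk]

end shamirLemmas

/-- in the biased Shamir-type `(k,n)` construction with
`p ≥ 1/t^k`, for any set `F` of `k-1` indices,
`R_∞(S|V_F) = R_∞(S) = -log((p t^k + (1-p) t^{k-1} - 1)/(t^k - 1))`. -/
theorem shamir_minEnt_secure (K : Type*) [Field K] [Fintype K] [DecidableEq K]
    (k n : ℕ) (hk : 1 ≤ k) (hkn : k ≤ n) (hn : n < Fintype.card K)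
    (x : Fin n → K) (hx : Function.Injective x) (hx0 : ∀ i, x i ≠ 0)
    (p : ℝ) (hp : 1 / (Fintype.card K : ℝ) ^ k ≤ p) (hp1 : p ≤ 1)
    (F : Finset (Fin n)) (hF : F.card = k - 1) :
    condMinEnt (dist (muShamir K k n x p)
        (fun sv => (sv.1, fun j : F => sv.2 j.1))) =
      minEnt (dist (muShamir K k n x p) Prod.fst) ∧
    minEnt (dist (muShamir K k n x p) Prod.fst) =
      - Real.log
        ((p * (Fintype.card K : ℝ) ^ k + (1 - p) * (Fintype.card K : ℝ) ^ (k - 1) - 1) /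
          ((Fintype.card K : ℝ) ^ k - 1)) := by
  classical
  have hk1 : 1 ≤ Fintype.card K := Fintype.card_pos
  have ht2 : 2 ≤ Fintype.card K := by omega
  set t := Fintype.card K with ht
  have htR : (1:ℝ) < (t:ℝ) := by exact_mod_cast ht2
  have htk : (1:ℝ) < (t:ℝ)^k := one_lt_pow₀ htR (by omega)
  set q : ℝ := (1-p)/((t:ℝ)^k - 1) with hq
  have hq0 : 0 ≤ q := div_nonneg (by linarith) (by linarith)
  have hp0 : 0 < p := lt_of_lt_of_le (by positivity) hp
  have hpq : q ≤ p := by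
    rw [hq, div_le_iff₀ (by linarith)]
    rw [div_le_iff₀ (by positivity)] at hp
    nlinarith
  set A : ℝ := p + ((t:ℝ)^(k-1) - 1) * q with hA
  set P := dist (muShamir K k n x p) (fun sv => (sv.1, fun j : F => sv.2 j.1)) with hPdef
  -- closed form for the marginal of S
  have hfst : ∀ s : K, dist (muShamir K k n x p) Prod.fst s
      = if s = 0 then A else (t:ℝ)^(k-1) * q := by
    intro s
    rw [dist_eq K k n x p hx hx0 F hF (by omega) hk Prod.fst s]
    have h1 : ∀ sr : K × (Fin (k-1) → K),
        (if Prod.fst (shamirShare K k n x sr) = s then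
          (if sr = ((0:K), fun _ => (0:K)) then p else (1-p)/((t:ℝ)^k - 1)) else 0)
        = (if sr.1 = s then
          (if sr = ((0:K), fun _ => (0:K)) then p else q) else 0) := fun sr => rfl
    refine Eq.trans (Finset.sum_congr rfl (fun sr _ => h1 sr)) ?_
    rw [sum_ite_pair (((0:K), fun _ => (0:K)) : K × (Fin (k-1) → K)) s p q]
    simp only [Fintype.card_fun, Fintype.card_fin]
    push_cast
    rfl
  have hsupS : (⨆ s, dist (muShamir K k n x p) Prod.fst s) = A := by
    simp only [hfst]
    apply ciSup_ite
    nlinarith [hq0, hpq]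
  -- closed form for the joint of (S, V_F)
  set e : K × (Fin (k-1) → K) → K × (F → K) := fun sr =>
    (sr.1, fun j : F => sr.1 + ∑ ℓ : Fin (k-1), x j.1 ^ ((ℓ:ℕ)+1) * sr.2 ℓ) with he
  have hbij : Function.Bijective e := psi_bij K k n x hx hx0 F hF hk
  have he0 : e ((0:K), fun _ => (0:K)) = ((0:K), fun _ => (0:K)) := by
    simp [he]
  have hjoint : ∀ sw : K × (F → K), P sw
      = if sw = ((0:K), fun _ => (0:K)) then p else q := by
    intro sw
    rw [hPdef, dist_eq K k n x p hx hx0 F hF (by omega) hk _ sw]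
    have h1 : ∀ sr : K × (Fin (k-1) → K),
        (if ((shamirShare K k n x sr).1, fun j : F => (shamirShare K k n x sr).2 j.1) = sw then
          (if sr = ((0:K), fun _ => (0:K)) then p else (1-p)/((t:ℝ)^k - 1)) else 0)
        = (if e sr = sw then
          (if e sr = e ((0:K), fun _ => (0:K)) then p else q) else 0) := by
      intro sr
      have h2 : (((shamirShare K k n x sr).1, fun j : F => (shamirShare K k n x sr).2 j.1)
          : K × (F → K)) = e sr := rfl
      rw [h2]
      have h3 : (sr = ((0:K), fun _ => (0:K))) ↔ (e sr = e ((0:K), fun _ => (0:K))) :=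
        ⟨fun h => by rw [h], fun h => hbij.injective h⟩
      exact congrArg (fun X => if e sr = sw then X else 0) (if_congr h3 rfl rfl)
    refine Eq.trans (Finset.sum_congr rfl (fun sr _ => h1 sr)) ?_
    rw [sum_ite_bij hbij sw (e ((0:K), fun _ => (0:K))) p q, he0]
  -- marginal on V_F
  have hmarg : ∀ w : F → K, margY P w
      = if w = (fun _ => (0:K)) then p + ((t:ℝ)-1)*q else (t:ℝ)*q := by
    intro w
    show (∑ s : K, P (s, w)) = _
    simp only [hjoint]
    by_cases hw : w = (fun _ => (0:K))
    · subst hw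
      have h2 : ∀ s : K, (((s, fun _ => (0:K)) : K × (F → K)) = ((0:K), fun _ => (0:K)))
          ↔ (s = (0:K)) := by
        intro s
        simp [Prod.ext_iff]
      simp only [h2, if_pos rfl]
      rw [sum_ite_const (0:K) p q, ← ht]
      simp
    · have h2 : ∀ s : K, ¬(((s, w) : K × (F → K)) = ((0:K), fun _ => (0:K))) := by
        intro s h
        exact hw (congrArg Prod.snd h)
      simp only [h2, if_neg, if_neg hw]
      simp [Finset.sum_const, Finset.card_univ, mul_comm]
      exact Or.inl ht.symm
  -- the per-share term
  have hterm : ∀ w : F → K, margY P w * (⨆ s, P (s, w) / margY P w)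
      = if w = (fun _ => (0:K)) then p else q := by
    intro w
    by_cases hw : w = (fun _ => (0:K))
    · subst hw
      rw [hmarg, if_pos rfl, if_pos rfl]
      have hm0 : (0:ℝ) < p + ((t:ℝ)-1)*q := by
        have : (0:ℝ) ≤ ((t:ℝ)-1)*q := mul_nonneg (by linarith) hq0
        linarith
      have hs1 : (⨆ s : K, P (s, fun _ => (0:K)) / (p + ((t:ℝ)-1)*q))
          = p / (p + ((t:ℝ)-1)*q) := by
        have h1 : ∀ s : K, P (s, fun _ => (0:K)) / (p + ((t:ℝ)-1)*q)
            = if s = 0 then p / (p + ((t:ℝ)-1)*q) else q / (p + ((t:ℝ)-1)*q) := by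
          intro s
          rw [hjoint]
          by_cases hs : s = (0:K) <;> simp [hs, Prod.ext_iff]
        simp only [h1]
        apply ciSup_ite
        gcongr
      rw [hs1]
      field_simp
    · rw [hmarg, if_neg hw, if_neg hw]
      have h1 : ∀ s : K, P (s, w) = q := by
        intro s
        rw [hjoint, if_neg]
        intro h
        exact hw (congrArg Prod.snd h)
      simp only [h1]
      rw [ciSup_const]
      rcases eq_or_lt_of_le hq0 with hq' | hq'
      · simp [← hq']
      · have htpos : (0:ℝ) < (t:ℝ) := by linarith
        field_simp
  have hsum : (∑ w, margY P w * ⨆ s, P (s, w) / margY P w) = A := by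
    simp only [hterm]
    rw [sum_ite_const (fun _ => (0:K) : F → K) p q]
    have hcard : (Fintype.card (F → K) : ℝ) = (t:ℝ)^(k-1) := by
      rw [Fintype.card_fun, Fintype.card_coe, hF]
      push_cast
      rfl
    rw [hcard, hA]
  constructor
  · rw [condMinEnt, minEnt, hsum]
    rw [show (⨆ s, dist (muShamir K k n x p) Prod.fst s) = A from hsupS]
  · rw [minEnt]
    rw [show (⨆ s, dist (muShamir K k n x p) Prod.fst s) = A from hsupS]
    have hAeq : A = (p * (t:ℝ)^k + (1-p) * (t:ℝ)^(k-1) - 1)/((t:ℝ)^k - 1) := by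
      rw [hA, hq]
      have hd : (t:ℝ)^k - 1 ≠ 0 := by linarith
      field_simp
      ring
    rw [hAeq]
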